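/- For every x ∈ D (i.e., Dh(x) surjective) and every β ≥ 0, the gradient of Fletcher's augmented Lagrangian satisfies ∇g(x) = (∇f(x) − Dh(x)*[λ(x)]) + 2β·Dh(x)*[h(x)] − Dλ(x)*[h(x)], where the first term equals the orthogonal projection of ∇f(x) onto ker Dh(x) and the second term lies in (ker Dh(x))^⊥. In particular, if h(x) = 0 then ∇g(x) = ∇f(x) − Dh(x)*[λ(x)]. -/

import Mathlib

open scoped RealInnerProductSpace ContDiff

noncomputable section

variable {E : Type*} [NormedAddCommGroup E] [InnerProductSpace ℝ E] [FiniteDimensional ℝ E] {m : ℕ}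

/-- The least-squares multipliers `λ(x) = (Dh(x) ∘ Dh(x)*)⁻¹ (Dh(x)[∇f(x)]) = (Dh(x)*)† ∇f(x)`.
(When `Dh(x)` is surjective, `Dh(x) ∘ Dh(x)*` is bijective and `Function.invFun` returns
its genuine inverse applied to `Dh(x)[∇f(x)]`.) -/
def lam (f : E → ℝ) (h : E → EuclideanSpace ℝ (Fin m)) (x : E) : EuclideanSpace ℝ (Fin m) :=
  Function.invFun
    (fun y => fderiv ℝ h x (ContinuousLinearMap.adjoint (fderiv ℝ h x) y))
    (fderiv ℝ h x (gradient f x))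

/-- Fletcher's augmented Lagrangian `g(x) = f(x) − ⟪λ(x), h(x)⟫ + β‖h(x)‖²`. -/
def flal (f : E → ℝ) (h : E → EuclideanSpace ℝ (Fin m)) (β : ℝ) (x : E) : ℝ :=
  f x - ⟪lam f h x, h x⟫ + β * ‖h x‖ ^ 2

/-- The smallest singular value `σ_min(A) = min_{‖y‖=1} ‖A*[y]‖` of a linear map. -/
def sigmaMin (A : E →L[ℝ] EuclideanSpace ℝ (Fin m)) : ℝ :=
  sInf ((fun y => ‖ContinuousLinearMap.adjoint A y‖) '' {y : EuclideanSpace ℝ (Fin m) | ‖y‖ = 1})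

/-- `C_λ(x) = ‖Dλ(x)‖`, the operator norm of the derivative of the multipliers. -/
def Clam (f : E → ℝ) (h : E → EuclideanSpace ℝ (Fin m)) (x : E) : ℝ :=
  ‖fderiv ℝ (lam f h) x‖

/-- `β₁(x) = σ₁(Dh(x))·C_λ(x) / (2σ_min(Dh(x))²)`. -/
def beta1 (f : E → ℝ) (h : E → EuclideanSpace ℝ (Fin m)) (x : E) : ℝ :=
  ‖fderiv ℝ h x‖ * Clam f h x / (2 * sigmaMin (fderiv ℝ h x) ^ 2)

/-- `β₂(x) = C_λ(x)/σ_min(Dh(x))`. -/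
def beta2 (f : E → ℝ) (h : E → EuclideanSpace ℝ (Fin m)) (x : E) : ℝ :=
  Clam f h x / sigmaMin (fderiv ℝ h x)

/-- `β₃(x) = 1/σ_min(Dh(x))`. -/
def beta3 (h : E → EuclideanSpace ℝ (Fin m)) (x : E) : ℝ :=
  1 / sigmaMin (fderiv ℝ h x)

/-! ### Auxiliary material -/

/-- `T(z) = Dh(z) ∘ Dh(z)*`. -/
def Tm (h : E → EuclideanSpace ℝ (Fin m)) (z : E) :
    EuclideanSpace ℝ (Fin m) →L[ℝ] EuclideanSpace ℝ (Fin m) :=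
  (fderiv ℝ h z).comp (ContinuousLinearMap.adjoint (fderiv ℝ h z))

lemma isUnit_Tm (h : E → EuclideanSpace ℝ (Fin m)) (x : E)
    (hsurj : Function.Surjective (fderiv ℝ h x)) : IsUnit (Tm h x) := by
  set A := fderiv ℝ h x with hA
  have hker : ∀ y, Tm h x y = 0 → y = 0 := by
    intro y hy
    have h1 : ⟪ContinuousLinearMap.adjoint A y, ContinuousLinearMap.adjoint A y⟫ = 0 := by
      rw [ContinuousLinearMap.adjoint_inner_right A (ContinuousLinearMap.adjoint A y) y]
      show ⟪Tm h x y, y⟫ = 0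
      rw [hy, inner_zero_left]
    have h2 : ContinuousLinearMap.adjoint A y = 0 := inner_self_eq_zero.mp h1
    have h3 : ∀ w, ⟪y, w⟫ = 0 := by
      intro w
      obtain ⟨v, rfl⟩ := hsurj w
      rw [← ContinuousLinearMap.adjoint_inner_left, h2]
      exact inner_zero_left v
    exact inner_self_eq_zero.mp (h3 y)
  have hinj : Function.Injective ⇑(Tm h x) := by
    intro a b hab
    have h0 : Tm h x (a - b) = 0 := by rw [map_sub, hab, sub_self]
    have := hker _ h0
    rwa [sub_eq_zero] at this
  have hsurjT : Function.Surjective ⇑(Tm h x) :=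
    (LinearMap.injective_iff_surjective
      (f := ((Tm h x : EuclideanSpace ℝ (Fin m) →ₗ[ℝ] EuclideanSpace ℝ (Fin m))))).mp hinj
  let e : EuclideanSpace ℝ (Fin m) ≃ₗ[ℝ] EuclideanSpace ℝ (Fin m) :=
    LinearEquiv.ofBijective ((Tm h x) : EuclideanSpace ℝ (Fin m) →ₗ[ℝ] EuclideanSpace ℝ (Fin m))
      ⟨hinj, hsurjT⟩
  let ce := e.toContinuousLinearEquiv
  refine ⟨⟨Tm h x, (ce.symm : EuclideanSpace ℝ (Fin m) →L[ℝ] EuclideanSpace ℝ (Fin m)), ?_, ?_⟩, rfl⟩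
  · refine ContinuousLinearMap.ext fun y => ?_
    show Tm h x (ce.symm y) = y
    exact e.apply_symm_apply y
  · refine ContinuousLinearMap.ext fun y => ?_
    show ce.symm (Tm h x y) = y
    exact e.symm_apply_apply y

lemma Tm_surj_of_isUnit (h : E → EuclideanSpace ℝ (Fin m)) (z : E)
    (hu : IsUnit (Tm h z)) : Function.Surjective ⇑(Tm h z) := by
  intro b
  refine ⟨Ring.inverse (Tm h z) b, ?_⟩
  have : (Tm h z * Ring.inverse (Tm h z)) b = b := by
    rw [Ring.mul_inverse_cancel _ hu]; rfl
  exact this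

lemma Tm_inj_of_isUnit (h : E → EuclideanSpace ℝ (Fin m)) (z : E)
    (hu : IsUnit (Tm h z)) : Function.Injective ⇑(Tm h z) := by
  intro a b hab
  have : ∀ c, Ring.inverse (Tm h z) (Tm h z c) = c := by
    intro c
    have : (Ring.inverse (Tm h z) * Tm h z) c = c := by
      rw [Ring.inverse_mul_cancel _ hu]; rfl
    exact this
  rw [← this a, ← this b, hab]

lemma Tm_lam (f : E → ℝ) (h : E → EuclideanSpace ℝ (Fin m)) (z : E)
    (hu : IsUnit (Tm h z)) :
    Tm h z (lam f h z) = fderiv ℝ h z (gradient f z) := by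
  have : (fun y => fderiv ℝ h z (ContinuousLinearMap.adjoint (fderiv ℝ h z) y)) = ⇑(Tm h z) := rfl
  show (fun y => fderiv ℝ h z (ContinuousLinearMap.adjoint (fderiv ℝ h z) y))
    (lam f h z) = _
  rw [lam, this]
  exact Function.invFun_eq (Tm_surj_of_isUnit h z hu _)

lemma lam_eq_of_isUnit (f : E → ℝ) (h : E → EuclideanSpace ℝ (Fin m)) (z : E)
    (hu : IsUnit (Tm h z)) :
    lam f h z = Ring.inverse (Tm h z) (fderiv ℝ h z (gradient f z)) := by
  apply Tm_inj_of_isUnit h z hu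
  rw [Tm_lam f h z hu]
  have : (Tm h z * Ring.inverse (Tm h z)) (fderiv ℝ h z (gradient f z))
      = fderiv ℝ h z (gradient f z) := by
    rw [Ring.mul_inverse_cancel _ hu]; rfl
  exact this.symm

/-- The adjoint as an `ℝ`-linear map on continuous linear maps. -/
def adjL : (E →L[ℝ] EuclideanSpace ℝ (Fin m)) →ₗ[ℝ] (EuclideanSpace ℝ (Fin m) →L[ℝ] E) where
  toFun A := ContinuousLinearMap.adjoint A
  map_add' A B := map_add _ A B
  map_smul' c A := by simp

lemma differentiableAt_lam (f : E → ℝ) (h : E → EuclideanSpace ℝ (Fin m))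
    (hf : ContDiff ℝ ∞ f) (hh : ContDiff ℝ ∞ h) (x : E)
    (hu : IsUnit (Tm h x)) : DifferentiableAt ℝ (lam f h) x := by
  have hdh : ContDiff ℝ ∞ (fun z => fderiv ℝ h z) := hh.fderiv_right (m := ∞) (by simp)
  have ddh : Differentiable ℝ (fun z => fderiv ℝ h z) := hdh.differentiable (by simp)
  have dadj : DifferentiableAt ℝ (fun z => ContinuousLinearMap.adjoint (fderiv ℝ h z)) x :=
    ((adjL (E := E) (m := m)).toContinuousLinearMap.differentiable.differentiableAt).comp x
      (ddh x)
  have dT : DifferentiableAt ℝ (Tm h) x := (ddh x).clm_comp dadj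
  have dgrad : DifferentiableAt ℝ (gradient f) x := by
    have : gradient f = fun z => (InnerProductSpace.toDual ℝ E).symm (fderiv ℝ f z) := rfl
    rw [this]
    exact ((InnerProductSpace.toDual ℝ E).symm.toContinuousLinearEquiv.differentiable.differentiableAt).comp x
      (((hf.fderiv_right (m := ∞) (by simp)).differentiable (by simp)).differentiableAt)
  have db : DifferentiableAt ℝ (fun z => fderiv ℝ h z (gradient f z)) x :=
    (ddh x).clm_apply dgrad
  have dinv : DifferentiableAt ℝ (fun z => Ring.inverse (Tm h z)) x := (dT).inverse hu
  have dPhi : DifferentiableAt ℝ (fun z => Ring.inverse (Tm h z) (fderiv ℝ h z (gradient f z))) x :=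
    dinv.clm_apply db
  have hcont : Continuous (Tm h) := by
    have c1 : Continuous (fun z => fderiv ℝ h z) := hdh.continuous
    have c2 : Continuous (fun z => ContinuousLinearMap.adjoint (fderiv ℝ h z)) :=
      (adjL (E := E) (m := m)).toContinuousLinearMap.continuous.comp c1
    exact c1.clm_comp c2
  have hU : {z : E | IsUnit (Tm h z)} ∈ nhds x :=
    (Units.isOpen.preimage hcont).mem_nhds hu
  have hev : lam f h =ᶠ[nhds x] (fun z => Ring.inverse (Tm h z) (fderiv ℝ h z (gradient f z))) := by
    filter_upwards [hU] with z hz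
    exact lam_eq_of_isUnit f h z hz
  exact dPhi.congr_of_eventuallyEq hev

/-- Gradient formula for Fletcher's augmented Lagrangian:
`∇g(x) = (∇f(x) − Dh(x)*[λ(x)]) + 2β·Dh(x)*[h(x)] − Dλ(x)*[h(x)]`, where the first
term is the orthogonal projection of `∇f(x)` onto `ker Dh(x)` and the second term
is orthogonal to `ker Dh(x)`. In particular `∇g(x) = ∇f(x) − Dh(x)*[λ(x)]` when
`h(x) = 0`. -/
theorem gradient_of_fletcher_augmented_lagrangian
    (f : E → ℝ) (h : E → EuclideanSpace ℝ (Fin m))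
    (hf : ContDiff ℝ ∞ f) (hh : ContDiff ℝ ∞ h)
    (x : E) (hsurj : Function.Surjective (fderiv ℝ h x))
    (β : ℝ) (hβ : 0 ≤ β) :
    gradient (flal f h β) x =
      (gradient f x - ContinuousLinearMap.adjoint (fderiv ℝ h x) (lam f h x))
        + (2 * β) • ContinuousLinearMap.adjoint (fderiv ℝ h x) (h x)
        - ContinuousLinearMap.adjoint (fderiv ℝ (lam f h) x) (h x) ∧
    gradient f x - ContinuousLinearMap.adjoint (fderiv ℝ h x) (lam f h x)
      = ↑(Submodule.orthogonalProjectionOnto (LinearMap.ker (fderiv ℝ h x : E →ₗ[ℝ] EuclideanSpace ℝ (Fin m))) (gradient f x)) ∧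
    ContinuousLinearMap.adjoint (fderiv ℝ h x) (h x) ∈ (LinearMap.ker (fderiv ℝ h x : E →ₗ[ℝ] EuclideanSpace ℝ (Fin m)))ᗮ ∧
    (h x = 0 → gradient (flal f h β) x =
      gradient f x - ContinuousLinearMap.adjoint (fderiv ℝ h x) (lam f h x)) := by
  have hu : IsUnit (Tm h x) := isUnit_Tm h x hsurj
  have key : fderiv ℝ h x (ContinuousLinearMap.adjoint (fderiv ℝ h x) (lam f h x))
      = fderiv ℝ h x (gradient f x) := Tm_lam f h x hu
  have dlam : DifferentiableAt ℝ (lam f h) x := differentiableAt_lam f h hf hh x hu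
  -- Part 1: the gradient formula
  have part1 : gradient (flal f h β) x =
      (gradient f x - ContinuousLinearMap.adjoint (fderiv ℝ h x) (lam f h x))
        + (2 * β) • ContinuousLinearMap.adjoint (fderiv ℝ h x) (h x)
        - ContinuousLinearMap.adjoint (fderiv ℝ (lam f h) x) (h x) := by
    have hf' : HasFDerivAt f (fderiv ℝ f x) x :=
      ((hf.differentiable (by simp)) x).hasFDerivAt
    have hh' : HasFDerivAt h (fderiv ℝ h x) x :=
      ((hh.differentiable (by simp)) x).hasFDerivAt
    have hlam' : HasFDerivAt (lam f h) (fderiv ℝ (lam f h) x) x := dlam.hasFDerivAt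
    have hInner := HasFDerivAt.inner ℝ hlam' hh'
    have hHH := HasFDerivAt.inner ℝ hh' hh'
    have hflal : flal f h β = fun z => f z - ⟪lam f h z, h z⟫ + β * ⟪h z, h z⟫ := by
      funext z
      rw [flal, real_inner_self_eq_norm_sq]
    have hD : HasFDerivAt (flal f h β)
        ((fderiv ℝ f x
          - (fderivInnerCLM ℝ (lam f h x, h x)).comp
              ((fderiv ℝ (lam f h) x).prod (fderiv ℝ h x)))
          + β • ((fderivInnerCLM ℝ (h x, h x)).comp
              ((fderiv ℝ h x).prod (fderiv ℝ h x)))) x := by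
      rw [hflal]
      exact (hf'.sub hInner).add (hHH.const_mul β)
    have hgrad : gradient (flal f h β) x
        = (InnerProductSpace.toDual ℝ E).symm (fderiv ℝ (flal f h β) x) := rfl
    rw [hgrad, hD.fderiv]
    apply ext_inner_right ℝ
    intro v
    rw [InnerProductSpace.toDual_symm_apply]
    have hfv : fderiv ℝ f x v = ⟪gradient f x, v⟫ := by
      rw [show gradient f x = (InnerProductSpace.toDual ℝ E).symm (fderiv ℝ f x) from rfl,
        InnerProductSpace.toDual_symm_apply]
    simp only [ContinuousLinearMap.add_apply, ContinuousLinearMap.sub_apply,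
      ContinuousLinearMap.coe_smul', Pi.smul_apply, ContinuousLinearMap.comp_apply,
      ContinuousLinearMap.prod_apply, fderivInnerCLM_apply, smul_eq_mul,
      inner_sub_left, inner_add_left, real_inner_smul_left,
      ContinuousLinearMap.adjoint_inner_left, hfv]
    rw [real_inner_comm (fderiv ℝ (lam f h) x v) (h x),
      real_inner_comm (fderiv ℝ h x v) (h x)]
    ring
  refine ⟨part1, ?_, ?_, ?_⟩
  · -- Part 2: projection
    symm
    rw [← Submodule.starProjection_apply]; apply Submodule.eq_starProjection_of_mem_of_inner_eq_zero
    · rw [LinearMap.mem_ker]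
      show fderiv ℝ h x (gradient f x - ContinuousLinearMap.adjoint (fderiv ℝ h x) (lam f h x)) = 0
      rw [map_sub, key, sub_self]
    · intro w hw
      rw [LinearMap.mem_ker] at hw
      have : gradient f x - (gradient f x - ContinuousLinearMap.adjoint (fderiv ℝ h x) (lam f h x))
          = ContinuousLinearMap.adjoint (fderiv ℝ h x) (lam f h x) := by abel
      rw [this, ContinuousLinearMap.adjoint_inner_left]
      show ⟪lam f h x, fderiv ℝ h x w⟫ = 0
      rw [show fderiv ℝ h x w = 0 from hw, inner_zero_right]
  · -- Part 3: orthogonality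
    intro u hu'
    rw [LinearMap.mem_ker] at hu'
    rw [real_inner_comm, ContinuousLinearMap.adjoint_inner_left]
    show ⟪h x, fderiv ℝ h x u⟫ = 0
    rw [show fderiv ℝ h x u = 0 from hu', inner_zero_right]
  · -- Part 4
    intro h0
    rw [part1, h0]
    simp
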